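/- Let q > 1, n ≥ 1, and 2 ≤ d ≤ n. The polynomials {M_{n,d+i}(x,y) − x^n : 0 ≤ i ≤ n − d} form a basis of the ℚ-vector space of homogeneous polynomials of degree n in x, y all of whose monomials have degree at least d in y. -/

import Mathlib

open MvPolynomial

/-- The MDS weight enumerator `M_{n,d}(x,y)` of length `n` and minimum distance `d`
over a group of order `q`. -/
noncomputable def mdsEnum (q n d : ℕ) : MvPolynomial (Fin 2) ℚ :=
  X 0 ^ n + ∑ s ∈ Finset.Icc d n,
    MvPolynomial.C ((n.choose s : ℚ) * ((q : ℚ) - 1) *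
        ∑ i ∈ Finset.range (s - d + 1),
          (-1 : ℚ) ^ i * ((s - 1).choose i : ℚ) * (q : ℚ) ^ (s - d - i)) *
      X 0 ^ (n - s) * X 1 ^ s

/-- coefficient of the monomial `x^(n-t) y^t` in `x^(n-s) y^s`. -/
private lemma coeff_mono_aux (n s t : ℕ) :
    MvPolynomial.coeff (Finsupp.single 0 (n - t) + Finsupp.single 1 t)
      ((X 0 : MvPolynomial (Fin 2) ℚ) ^ (n - s) * X 1 ^ s) = if s = t then 1 else 0 := by
  rw [X_pow_eq_monomial, X_pow_eq_monomial, monomial_mul, one_mul, coeff_monomial]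
  congr 1
  simp only [eq_iff_iff]
  constructor
  · intro h
    have := DFunLike.congr_fun h (1 : Fin 2)
    simpa [Finsupp.single_apply] using this
  · rintro rfl; rfl

private lemma coeff_X0_pow (n t : ℕ) (ht : 1 ≤ t) :
    MvPolynomial.coeff (Finsupp.single 0 (n - t) + Finsupp.single 1 t)
      ((X 0 : MvPolynomial (Fin 2) ℚ) ^ n) = 0 := by
  rw [X_pow_eq_monomial, coeff_monomial, if_neg]
  intro h
  have := DFunLike.congr_fun h (1 : Fin 2)
  simp [Finsupp.single_apply] at this
  omega

/-- The coefficient of `mdsEnum q n d' - x^n`. -/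
private lemma coeff_mdsEnum (q n d' t : ℕ) (ht : 1 ≤ t) :
    MvPolynomial.coeff (Finsupp.single 0 (n - t) + Finsupp.single 1 t)
      (mdsEnum q n d' - X 0 ^ n) =
    if t ∈ Finset.Icc d' n then
      (n.choose t : ℚ) * ((q : ℚ) - 1) *
        ∑ i ∈ Finset.range (t - d' + 1),
          (-1 : ℚ) ^ i * ((t - 1).choose i : ℚ) * (q : ℚ) ^ (t - d' - i)
    else 0 := by
  rw [mdsEnum, add_sub_cancel_left, MvPolynomial.coeff_sum]
  have : ∀ s ∈ Finset.Icc d' n,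
      MvPolynomial.coeff (Finsupp.single 0 (n - t) + Finsupp.single 1 t)
        (MvPolynomial.C ((n.choose s : ℚ) * ((q : ℚ) - 1) *
          ∑ i ∈ Finset.range (s - d' + 1),
            (-1 : ℚ) ^ i * ((s - 1).choose i : ℚ) * (q : ℚ) ^ (s - d' - i)) *
          (X 0 : MvPolynomial (Fin 2) ℚ) ^ (n - s) * X 1 ^ s) =
      if s = t then ((n.choose s : ℚ) * ((q : ℚ) - 1) *
          ∑ i ∈ Finset.range (s - d' + 1),
            (-1 : ℚ) ^ i * ((s - 1).choose i : ℚ) * (q : ℚ) ^ (s - d' - i)) else 0 := by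
    intro s _
    rw [mul_assoc, coeff_C_mul, coeff_mono_aux n s t]
    simp [mul_ite]
  rw [Finset.sum_congr rfl this, Finset.sum_ite_eq' (Finset.Icc d' n) t]

/-- For `q > 1` and `2 ≤ d ≤ n`, the polynomials
`M_{n,d+i}(x,y) - xⁿ`, `0 ≤ i ≤ n-d`, form a basis of the ℚ-vector space of homogeneous
polynomials of degree `n` in `x,y` whose monomials all have degree at least `d` in `y`
(the span of the monomials `x^(n-s) y^s`, `d ≤ s ≤ n`). -/
theorem MDS_enums_form_basis (q n d : ℕ) (hq : 1 < q) (hd : 2 ≤ d) (hdn : d ≤ n) :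
    LinearIndependent ℚ
        (fun i : Fin (n - d + 1) => mdsEnum q n (d + (i : ℕ)) - X 0 ^ n) ∧
      Submodule.span ℚ
          (Set.range (fun i : Fin (n - d + 1) => mdsEnum q n (d + (i : ℕ)) - X 0 ^ n))
        = Submodule.span ℚ
            ((fun s : ℕ => (X 0 : MvPolynomial (Fin 2) ℚ) ^ (n - s) * X 1 ^ s) ''
              Set.Icc d n) := by
  classical
  set N := n - d with hN
  set cf : ℕ → ℕ → ℚ := fun d' s =>
    (n.choose s : ℚ) * ((q : ℚ) - 1) *
      ∑ i ∈ Finset.range (s - d' + 1),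
        (-1 : ℚ) ^ i * ((s - 1).choose i : ℚ) * (q : ℚ) ^ (s - d' - i) with hcf
  set v : Fin (N + 1) → MvPolynomial (Fin 2) ℚ :=
    fun i => mdsEnum q n (d + (i : ℕ)) - X 0 ^ n with hv
  set g : Fin (N + 1) → MvPolynomial (Fin 2) ℚ :=
    fun i => (X 0 : MvPolynomial (Fin 2) ℚ) ^ (n - (d + (i : ℕ))) * X 1 ^ (d + (i : ℕ))
    with hg
  -- the coordinate map
  set φ : MvPolynomial (Fin 2) ℚ →ₗ[ℚ] (Fin (N + 1) → ℚ) :=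
    LinearMap.pi (fun j : Fin (N + 1) =>
      lcoeff ℚ (Finsupp.single 0 (n - (d + (j : ℕ))) + Finsupp.single 1 (d + (j : ℕ))))
    with hφ
  have hφapp : ∀ (p : MvPolynomial (Fin 2) ℚ) (j : Fin (N + 1)),
      φ p j = MvPolynomial.coeff
        (Finsupp.single 0 (n - (d + (j : ℕ))) + Finsupp.single 1 (d + (j : ℕ))) p := by
    intro p j; rfl
  have hjn : ∀ j : Fin (N + 1), d + (j : ℕ) ≤ n := by
    intro j; have := j.2; omega
  -- the transition matrix
  set M : Matrix (Fin (N + 1)) (Fin (N + 1)) ℚ :=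
    fun i j => if (i : ℕ) ≤ (j : ℕ) then cf (d + (i : ℕ)) (d + (j : ℕ)) else 0 with hM
  have hφv : ∀ i, φ (v i) = M i := by
    intro i
    funext j
    rw [hφapp, hv, coeff_mdsEnum _ _ _ _ (by omega)]
    have : (d + (j : ℕ)) ∈ Finset.Icc (d + (i : ℕ)) n ↔ (i : ℕ) ≤ (j : ℕ) := by
      simp [Finset.mem_Icc]
      intro _; exact hjn j
    rw [hM]
    by_cases h : (i : ℕ) ≤ (j : ℕ) <;> simp [h, this] <;> rfl
  have hMdiag : ∀ i, M i i = (n.choose (d + (i : ℕ)) : ℚ) * ((q : ℚ) - 1) := by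
    intro i
    rw [hM]
    simp only [le_refl, if_true, hcf, Nat.sub_self]
    norm_num
  have hMdiag_ne : ∀ i, M i i ≠ 0 := by
    intro i
    rw [hMdiag]
    have h1 : (0 : ℚ) < n.choose (d + (i : ℕ)) := by
      exact_mod_cast Nat.choose_pos (hjn i)
    have h2 : (q : ℚ) - 1 ≠ 0 := by
      have : (1 : ℚ) < q := by exact_mod_cast hq
      intro h; nlinarith
    positivity
  have hMtri : M.BlockTriangular id := by
    intro i j hij
    have h : ¬ ((i : ℕ) ≤ (j : ℕ)) := by simpa using hij
    simp only [hM]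
    rw [if_neg h]
  have hMdet : M.det ≠ 0 := by
    rw [Matrix.det_of_upperTriangular hMtri]
    exact Finset.prod_ne_zero_iff.2 fun i _ => hMdiag_ne i
  have hMunit : IsUnit M := (Matrix.isUnit_iff_isUnit_det M).2 hMdet.isUnit
  haveI : Invertible M := hMunit.invertible
  -- linear independence of v
  have hLIrows : LinearIndependent ℚ (fun i => M i) :=
    Matrix.linearIndependent_rows_of_invertible M
  have hLI : LinearIndependent ℚ v := by
    apply LinearIndependent.of_comp φ
    have : φ ∘ v = fun i => M i := funext hφv
    rw [this]; exact hLIrows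
  refine ⟨hLI, ?_⟩
  -- linear independence of the monomials g
  have hφg : ∀ i, φ (g i) = (1 : Matrix (Fin (N + 1)) (Fin (N + 1)) ℚ) i := by
    intro i
    funext j
    rw [hφapp, hg]
    simp only
    rw [coeff_mono_aux]
    rw [Matrix.one_apply]
    have : d + (i : ℕ) = d + (j : ℕ) ↔ i = j := by
      constructor
      · intro h; exact Fin.ext (by omega)
      · rintro rfl; rfl
    by_cases h : i = j <;> simp [h, this] <;> exact fun e => h (Fin.ext e)
  have hLIg : LinearIndependent ℚ g := by
    apply LinearIndependent.of_comp φ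
    have : φ ∘ g = fun i => (1 : Matrix (Fin (N + 1)) (Fin (N + 1)) ℚ) i := funext hφg
    rw [this]
    haveI : Invertible (1 : Matrix (Fin (N + 1)) (Fin (N + 1)) ℚ) := invertibleOne
    exact Matrix.linearIndependent_rows_of_invertible 1
  -- the image set equals range of g
  have himg : ((fun s : ℕ => (X 0 : MvPolynomial (Fin 2) ℚ) ^ (n - s) * X 1 ^ s) ''
      Set.Icc d n) = Set.range g := by
    ext x
    constructor
    · rintro ⟨s, hs, rfl⟩
      rw [Set.mem_Icc] at hs
      refine ⟨⟨s - d, by omega⟩, ?_⟩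
      rw [hg]
      simp only
      congr 1 <;> congr 1 <;> omega
    · rintro ⟨i, rfl⟩
      exact ⟨d + (i : ℕ), Set.mem_Icc.2 ⟨by omega, hjn i⟩, rfl⟩
  -- span inclusion
  have hle : Submodule.span ℚ (Set.range v) ≤ Submodule.span ℚ (Set.range g) := by
    rw [Submodule.span_le]
    rintro x ⟨i, rfl⟩
    have hvi : v i = ∑ s ∈ Finset.Icc (d + (i : ℕ)) n,
        cf (d + (i : ℕ)) s • ((X 0 : MvPolynomial (Fin 2) ℚ) ^ (n - s) * X 1 ^ s) := by
      rw [hv]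
      simp only [mdsEnum, add_sub_cancel_left]
      refine Finset.sum_congr rfl fun s _ => ?_
      rw [smul_eq_C_mul, mul_assoc]
    rw [SetLike.mem_coe, hvi]
    refine Submodule.sum_mem _ fun s hs => Submodule.smul_mem _ _ ?_
    rw [Finset.mem_Icc] at hs
    apply Submodule.subset_span
    rw [← himg]
    exact ⟨s, Set.mem_Icc.2 ⟨by omega, hs.2⟩, rfl⟩
  rw [himg]
  haveI : FiniteDimensional ℚ (Submodule.span ℚ (Set.range g)) :=
    FiniteDimensional.span_of_finite ℚ (Set.finite_range g)
  have h1 : Module.finrank ℚ (Submodule.span ℚ (Set.range g)) = N + 1 := by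
    rw [finrank_span_eq_card hLIg]; simp
  have h2 : Module.finrank ℚ (Submodule.span ℚ (Set.range v)) = N + 1 := by
    rw [finrank_span_eq_card hLI]; simp
  exact Submodule.eq_of_le_of_finrank_le hle (by rw [h1, h2])
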